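/- Let λ > 0, let X be distributed as ZTP(λ), and let X* be independent of X with the size-biased distribution P*_λ(k) = e^{−λ} λ^{k−1}/(k−1)! for k = 1, 2, …. Then P(X < X*) = 1 − (e^{−λ}/(1 − e^{−λ})) · ∫₀^λ I₀(2√(λt)) e^{−t} dt. -/

import Mathlib

open MeasureTheory ProbabilityTheory Real Filter

/-- Modified Bessel function of the first kind of order 0, via its power series. -/
noncomputable def besselI0 (z : ℝ) : ℝ :=
  ∑' k : ℕ, (z / 2) ^ (2 * k) / ((Nat.factorial k : ℝ)) ^ 2

/-- Modified Bessel function of the first kind of order 1, via its power series. -/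
noncomputable def besselI1 (z : ℝ) : ℝ :=
  (z / 2) * ∑' k : ℕ, (z / 2) ^ (2 * k) / ((Nat.factorial k : ℝ) * (Nat.factorial (k + 1) : ℝ))

/-- Probability mass function of the zero-truncated Poisson distribution ZTP(λ). -/
noncomputable def ztpPmf (lam : ℝ) (k : ℕ) : ℝ :=
  if k = 0 then 0
  else Real.exp (-lam) * lam ^ k / ((1 - Real.exp (-lam)) * (Nat.factorial k : ℝ))

/-- Probability mass function of the size-biased distribution associated with ZTP(λ). -/
noncomputable def sizeBiasedPmf (lam : ℝ) (k : ℕ) : ℝ :=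
  if k = 0 then 0
  else Real.exp (-lam) * lam ^ (k - 1) / (Nat.factorial (k - 1) : ℝ)

/-- Laplace transform of the ZTP(λ) distribution. -/
noncomputable def ztpLaplace (lam x : ℝ) : ℝ :=
  (Real.exp (-lam) / (1 - Real.exp (-lam))) * (Real.exp (lam * Real.exp (-x)) - 1)

/-- For X ~ ZTP(λ) and X* independent with the associated size-biased distribution,
P(X < X*) = 1 − (e^{−λ}/(1 − e^{−λ})) ∫₀^λ I₀(2√(λt)) e^{−t} dt. -/
lemma hasDerivAt_expPartial (k : ℕ) (t : ℝ) :
    HasDerivAt (fun t : ℝ => ∑ j ∈ Finset.range (k+1), t^j / (Nat.factorial j : ℝ))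
      (∑ j ∈ Finset.range k, t^j / (Nat.factorial j : ℝ)) t := by
  have h : ∀ j ∈ Finset.range (k+1), HasDerivAt (fun t : ℝ => t^j / (Nat.factorial j : ℝ))
      ((j * t^(j-1)) / (Nat.factorial j : ℝ)) t := fun j _ =>
    (hasDerivAt_pow j t).div_const _
  have h2 := HasDerivAt.fun_sum h
  refine h2.congr_deriv (Eq.symm ?_)
  rw [Finset.sum_range_succ']
  simp only [Nat.cast_zero, zero_mul, pow_zero, Nat.factorial_zero, Nat.cast_one, zero_div,
    add_zero, Nat.add_sub_cancel]
  refine Finset.sum_congr rfl fun i _ => ?_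
  rw [Nat.factorial_succ]
  have h1 : ((i:ℝ)+1) ≠ 0 := by positivity
  have h3 : ((Nat.factorial i : ℝ)) ≠ 0 := by positivity
  push_cast
  field_simp

lemma integral_pow_mul_exp_neg (k : ℕ) (lam : ℝ) :
    ∫ t in (0:ℝ)..lam, t^k * Real.exp (-t)
      = (Nat.factorial k : ℝ) *
        (1 - Real.exp (-lam) * ∑ j ∈ Finset.range (k+1), lam^j / (Nat.factorial j : ℝ)) := by
  have hF : ∀ t ∈ Set.uIcc (0:ℝ) lam, HasDerivAt
      (fun t => -((Nat.factorial k : ℝ) *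
        (Real.exp (-t) * ∑ j ∈ Finset.range (k+1), t^j / (Nat.factorial j : ℝ))))
      (t^k * Real.exp (-t)) t := by
    intro t _
    have h1 : HasDerivAt (fun t : ℝ => Real.exp (-t)) (-Real.exp (-t)) t := by
      simpa using (hasDerivAt_neg' t).exp
    have h2 := hasDerivAt_expPartial k t
    have h3 := ((h1.fun_mul h2).const_mul ((Nat.factorial k : ℝ))).fun_neg
    refine h3.congr_deriv (Eq.symm ?_)
    have hs : (∑ j ∈ Finset.range (k+1), t^j / (Nat.factorial j : ℝ))
        = (∑ j ∈ Finset.range k, t^j / (Nat.factorial j : ℝ)) + t^k / (Nat.factorial k : ℝ) := by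
      rw [Finset.sum_range_succ]
    rw [hs]
    have h4 : ((Nat.factorial k : ℝ)) ≠ 0 := by positivity
    field_simp
    ring
  rw [intervalIntegral.integral_eq_sub_of_hasDerivAt hF
    ((Continuous.mul (continuous_pow k) (by continuity)).intervalIntegrable _ _)]
  have h0 : (∑ j ∈ Finset.range (k+1), (0:ℝ)^j / (Nat.factorial j : ℝ)) = 1 := by
    rw [Finset.sum_range_succ']
    simp
  rw [h0]
  simp
  ring

lemma swap_tsum {q : ℕ → ℝ} (hq : ∀ k, 0 ≤ q k) (hsum : Summable q) :
    ∑' k : ℕ, q k * ∑ j ∈ Finset.range k, q j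
      = ∑' k : ℕ, q k * ∑' j : ℕ, q (j + (k + 1)) := by
  set Q : ℕ → ENNReal := fun k => ENNReal.ofReal (q k) with hQ
  have hTle : ∀ k, ∑ j ∈ Finset.range k, q j ≤ ∑' j, q j :=
    fun k => Summable.sum_le_tsum _ (fun i _ => hq i) hsum
  have hTnn : ∀ k, 0 ≤ ∑ j ∈ Finset.range k, q j :=
    fun k => Finset.sum_nonneg fun i _ => hq i
  have hshift : ∀ k : ℕ, Summable fun j => q (j + (k+1)) :=
    fun k => (summable_nat_add_iff (k+1)).2 hsum
  have htailnn : ∀ k, 0 ≤ ∑' j, q (j + (k+1)) := fun k => tsum_nonneg fun j => hq _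
  have htaille : ∀ k, ∑' j, q (j + (k+1)) ≤ ∑' j, q j := by
    intro k
    have := Summable.sum_add_tsum_nat_add (f := q) (k+1) hsum
    nlinarith [hTnn (k+1), hTle (k+1), this]
  have hsum1 : Summable fun k => q k * ∑ j ∈ Finset.range k, q j := by
    refine Summable.of_nonneg_of_le (fun k => mul_nonneg (hq k) (hTnn k))
      (fun k => ?_) (hsum.mul_left (∑' j, q j))
    calc q k * ∑ j ∈ Finset.range k, q j ≤ q k * ∑' j, q j :=
          mul_le_mul_of_nonneg_left (hTle k) (hq k)
      _ = (∑' j, q j) * q k := mul_comm _ _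
  have hsum2 : Summable fun k => q k * ∑' j, q (j + (k+1)) := by
    refine Summable.of_nonneg_of_le (fun k => mul_nonneg (hq k) (htailnn k))
      (fun k => ?_) (hsum.mul_left (∑' j, q j))
    calc q k * ∑' j, q (j + (k+1)) ≤ q k * ∑' j, q j :=
          mul_le_mul_of_nonneg_left (htaille k) (hq k)
      _ = (∑' j, q j) * q k := mul_comm _ _
  have key : (∑' k : ℕ, ∑' j : ℕ, (if j < k then Q k * Q j else 0))
      = ∑' k : ℕ, ∑' j : ℕ, (if k < j then Q k * Q j else 0) := by
    rw [ENNReal.tsum_comm]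
    congr 1; ext k; congr 1; ext j
    by_cases h : k < j <;> simp [h, mul_comm]
  have hL : ∀ k : ℕ, ENNReal.ofReal (q k * ∑ j ∈ Finset.range k, q j)
      = ∑' j : ℕ, (if j < k then Q k * Q j else 0) := by
    intro k
    rw [ENNReal.ofReal_mul (hq k), ENNReal.ofReal_sum_of_nonneg (fun i _ => hq i),
      Finset.mul_sum]
    rw [tsum_eq_sum (s := Finset.range k) (f := fun j => if j < k then Q k * Q j else 0)
      (by intro j hj; simp [Finset.mem_range] at hj; simp [hj])]
    exact Finset.sum_congr rfl fun j hj => by simp [hQ, Finset.mem_range.mp hj]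
  have hR : ∀ k : ℕ, ENNReal.ofReal (q k * ∑' j, q (j + (k+1)))
      = ∑' j : ℕ, (if k < j then Q k * Q j else 0) := by
    intro k
    rw [ENNReal.ofReal_mul (hq k), ENNReal.ofReal_tsum_of_nonneg
      (f := fun j => q (j + (k+1))) (fun j => hq _) (hshift k)]
    have hinj : Function.Injective (fun j : ℕ => j + (k+1)) := add_left_injective _
    have hsupp : Function.support (fun j => if k < j then ENNReal.ofReal (q j) else 0)
        ⊆ Set.range (fun j : ℕ => j + (k+1)) := by
      intro x hx
      simp only [Function.mem_support, ne_eq, ite_eq_right_iff, not_forall] at hx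
      obtain ⟨h, -⟩ := hx
      exact ⟨x - (k+1), show x - (k+1) + (k+1) = x by omega⟩
    have h5 : ∑' (c : ℕ), (if k < c + (k+1) then ENNReal.ofReal (q (c + (k+1))) else 0)
        = ∑' (b : ℕ), (if k < b then ENNReal.ofReal (q b) else 0) :=
      hinj.tsum_eq (f := fun j => if k < j then ENNReal.ofReal (q j) else 0) hsupp
    have h6 : ∑' (c : ℕ), ENNReal.ofReal (q (c + (k+1)))
        = ∑' (b : ℕ), (if k < b then ENNReal.ofReal (q b) else 0) := by
      rw [← h5]; exact tsum_congr fun c => by simp [show k < c + (k+1) by omega]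
    rw [h6, ← ENNReal.tsum_mul_left]
    exact tsum_congr fun j => by by_cases h : k < j <;> simp [hQ, h]
  have main : ENNReal.ofReal (∑' k : ℕ, q k * ∑ j ∈ Finset.range k, q j)
      = ENNReal.ofReal (∑' k : ℕ, q k * ∑' j, q (j + (k+1))) := by
    rw [ENNReal.ofReal_tsum_of_nonneg (fun k => mul_nonneg (hq k) (hTnn k)) hsum1,
      ENNReal.ofReal_tsum_of_nonneg (fun k => mul_nonneg (hq k) (htailnn k)) hsum2]
    simp_rw [hL, hR]
    exact key
  exact (ENNReal.ofReal_eq_ofReal_iff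
    (tsum_nonneg fun k => mul_nonneg (hq k) (hTnn k))
    (tsum_nonneg fun k => mul_nonneg (hq k) (htailnn k))).mp main

lemma measure_le_toReal {Ω : Type*} [MeasurableSpace Ω] (μ : Measure Ω) [IsProbabilityMeasure μ]
    (lam : ℝ) (hlam : 0 < lam)
    (X Xs : Ω → ℕ) (hX : Measurable X) (hXs : Measurable Xs)
    (hindep : IndepFun X Xs μ)
    (hdX : ∀ k : ℕ, μ (X ⁻¹' {k}) = ENNReal.ofReal (ztpPmf lam k))
    (hdXs : ∀ k : ℕ, μ (Xs ⁻¹' {k}) = ENNReal.ofReal (sizeBiasedPmf lam k)) :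
    (μ {ω | Xs ω ≤ X ω}).toReal
      = ∑' k : ℕ, ztpPmf lam k * ∑ m ∈ Finset.range (k+1), sizeBiasedPmf lam m := by
  have hE1 : Real.exp (-lam) < 1 := by
    rw [Real.exp_lt_one_iff]; linarith
  have hztpnn : ∀ k, 0 ≤ ztpPmf lam k := by
    intro k
    unfold ztpPmf
    split
    · exact le_refl 0
    · have h1 : (0:ℝ) < 1 - Real.exp (-lam) := by linarith
      positivity
  have hsbnn : ∀ k, 0 ≤ sizeBiasedPmf lam k := by
    intro k
    unfold sizeBiasedPmf
    split
    · exact le_refl 0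
    · positivity
  have hset : {ω | Xs ω ≤ X ω} = ⋃ k : ℕ, (X ⁻¹' {k} ∩ Xs ⁻¹' (Set.Iic k)) := by
    ext ω
    simp only [Set.mem_setOf_eq, Set.mem_iUnion, Set.mem_inter_iff, Set.mem_preimage,
      Set.mem_singleton_iff, Set.mem_Iic]
    exact ⟨fun h => ⟨X ω, rfl, h⟩, fun ⟨k, hk, h⟩ => hk ▸ h⟩
  have hmIic : ∀ k : ℕ, MeasurableSet (Set.Iic k : Set ℕ) := fun k => measurableSet_Iic
  have hmeasA : ∀ k : ℕ, MeasurableSet (X ⁻¹' {k} ∩ Xs ⁻¹' (Set.Iic k)) :=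
    fun k => (hX (measurableSet_singleton k)).inter (hXs (hmIic k))
  have hdisj : Pairwise (Function.onFun Disjoint fun k => X ⁻¹' {k} ∩ Xs ⁻¹' (Set.Iic k)) := by
    intro i j hij
    refine Set.disjoint_left.2 ?_
    rintro ω ⟨h1, -⟩ ⟨h2, -⟩
    simp only [Set.mem_preimage, Set.mem_singleton_iff] at h1 h2
    exact hij (h1.symm.trans h2)
  rw [hset, measure_iUnion hdisj hmeasA]
  have hterm : ∀ k : ℕ, μ (X ⁻¹' {k} ∩ Xs ⁻¹' (Set.Iic k))
      = ENNReal.ofReal (ztpPmf lam k * ∑ m ∈ Finset.range (k+1), sizeBiasedPmf lam m) := by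
    intro k
    rw [hindep.measure_inter_preimage_eq_mul _ _ (measurableSet_singleton k) (hmIic k)]
    have hIic : (Set.Iic k : Set ℕ) = ⋃ m ∈ Finset.range (k+1), {m} := by
      ext m; simp [Nat.lt_succ_iff]
    rw [hdX k, hIic, Set.preimage_iUnion₂, measure_biUnion_finset ?_ ?_]
    · rw [ENNReal.ofReal_mul (hztpnn k)]
      congr 1
      rw [ENNReal.ofReal_sum_of_nonneg (fun m _ => hsbnn m)]
      exact Finset.sum_congr rfl fun m _ => (hdXs m)
    · intro a _ b hb hab
      refine Set.disjoint_left.2 ?_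
      rintro ω h1 h2
      simp only [Set.mem_preimage, Set.mem_singleton_iff] at h1 h2
      exact hab (h1.symm.trans h2)
    · exact fun m _ => hXs (measurableSet_singleton m)
  simp_rw [hterm]
  rw [ENNReal.tsum_toReal_eq (fun k => ENNReal.ofReal_ne_top)]
  exact tsum_congr fun k => ENNReal.toReal_ofReal
    (mul_nonneg (hztpnn k) (Finset.sum_nonneg fun m _ => hsbnn m))

lemma integral_bessel (lam : ℝ) (hlam : 0 < lam) :
    ∫ t in (0:ℝ)..lam, besselI0 (2 * Real.sqrt (lam * t)) * Real.exp (-t)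
      = ∑' k : ℕ, (lam^k / (Nat.factorial k : ℝ)) *
          (1 - Real.exp (-lam) * ∑ j ∈ Finset.range (k+1), lam^j / (Nat.factorial j : ℝ)) := by
  set F : ℕ → ℝ → ℝ :=
    fun k t => (lam^k / (Nat.factorial k : ℝ)^2) * (t^k * Real.exp (-t)) with hFdef
  have hcong : ∀ t ∈ Set.uIcc (0:ℝ) lam,
      besselI0 (2 * Real.sqrt (lam * t)) * Real.exp (-t) = ∑' k : ℕ, F k t := by
    intro t ht
    rw [Set.uIcc_of_le hlam.le] at ht
    have ht0 : 0 ≤ lam * t := mul_nonneg hlam.le ht.1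
    unfold besselI0
    rw [← tsum_mul_right]
    refine tsum_congr fun k => ?_
    have h2 : (2 * Real.sqrt (lam * t) / 2) ^ (2 * k) = (lam * t)^k := by
      rw [mul_div_cancel_left₀ _ (two_ne_zero), pow_mul, Real.sq_sqrt ht0]
    rw [hFdef]
    simp only []
    rw [h2, mul_pow]
    ring
  rw [intervalIntegral.integral_congr hcong, intervalIntegral.integral_of_le hlam.le]
  have hFcont : ∀ k : ℕ, Continuous (F k) := by
    intro k
    apply Continuous.mul continuous_const
    exact (continuous_pow k).mul (Real.continuous_exp.comp continuous_neg)
  have hint : ∀ k : ℕ, IntegrableOn (F k) (Set.Ioc 0 lam) :=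
    fun k => ((hFcont k).integrableOn_Icc (a := 0) (b := lam)).mono_set Set.Ioc_subset_Icc_self
  -- value of each integral
  have hq : Summable (fun k : ℕ => Real.exp (-lam) * (lam^k / (Nat.factorial k : ℝ))) :=
    (Real.summable_pow_div_factorial lam).mul_left _
  have hexp : ∑' k : ℕ, lam^k / (Nat.factorial k : ℝ) = Real.exp lam := by
    rw [Real.exp_eq_exp_ℝ, NormedSpace.exp_eq_tsum_div]
  have htot : ∑' k : ℕ, Real.exp (-lam) * (lam^k / (Nat.factorial k : ℝ)) = 1 := by
    rw [tsum_mul_left, hexp, ← Real.exp_add]; simp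
  have hSk : ∀ k : ℕ, Real.exp (-lam) * ∑ j ∈ Finset.range (k+1), lam^j / (Nat.factorial j : ℝ) ≤ 1 := by
    intro k
    rw [Finset.mul_sum]
    calc ∑ j ∈ Finset.range (k+1), Real.exp (-lam) * (lam^j / (Nat.factorial j : ℝ))
        ≤ ∑' j : ℕ, Real.exp (-lam) * (lam^j / (Nat.factorial j : ℝ)) :=
          Summable.sum_le_tsum _ (fun i _ => by positivity) hq
      _ = 1 := htot
  have hSknn : ∀ k : ℕ, 0 ≤ Real.exp (-lam) * ∑ j ∈ Finset.range (k+1), lam^j / (Nat.factorial j : ℝ) := by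
    intro k
    have : (0:ℝ) ≤ ∑ j ∈ Finset.range (k+1), lam^j / (Nat.factorial j : ℝ) :=
      Finset.sum_nonneg fun j _ => by positivity
    positivity
  have hvalue : ∀ k : ℕ, ∫ t in Set.Ioc (0:ℝ) lam, F k t
      = (lam^k / (Nat.factorial k : ℝ)) *
          (1 - Real.exp (-lam) * ∑ j ∈ Finset.range (k+1), lam^j / (Nat.factorial j : ℝ)) := by
    intro k
    rw [← intervalIntegral.integral_of_le hlam.le]
    rw [hFdef]
    simp only []
    rw [intervalIntegral.integral_const_mul, integral_pow_mul_exp_neg]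
    have h4 : ((Nat.factorial k : ℝ)) ≠ 0 := by positivity
    field_simp
  have hnorm : Summable fun k : ℕ => ∫ t in Set.Ioc (0:ℝ) lam, ‖F k t‖ := by
    have heq : ∀ k : ℕ, (∫ t in Set.Ioc (0:ℝ) lam, ‖F k t‖) = ∫ t in Set.Ioc (0:ℝ) lam, F k t := by
      intro k
      refine setIntegral_congr_fun measurableSet_Ioc fun t ht => ?_
      have ht0 : 0 ≤ t := le_of_lt ht.1
      rw [hFdef]
      simp only []
      rw [Real.norm_of_nonneg (by positivity)]
    simp_rw [heq, hvalue]
    refine Summable.of_nonneg_of_le (fun k => ?_) (fun k => ?_)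
      (Real.summable_pow_div_factorial lam)
    · have h1 := hSk k
      have h2 : (0:ℝ) ≤ lam^k / (Nat.factorial k : ℝ) := by positivity
      nlinarith
    · have h1 := hSknn k
      have h2 : (0:ℝ) ≤ lam^k / (Nat.factorial k : ℝ) := by positivity
      nlinarith
  rw [← MeasureTheory.integral_tsum_of_summable_integral_norm hint hnorm]
  exact tsum_congr hvalue

lemma tsum_chain (lam : ℝ) (hlam : 0 < lam) :
    ∑' k : ℕ, ztpPmf lam k * ∑ m ∈ Finset.range (k+1), sizeBiasedPmf lam m
      = (Real.exp (-lam) / (1 - Real.exp (-lam))) *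
          ∑' k : ℕ, (lam^k / (Nat.factorial k : ℝ)) *
            (1 - Real.exp (-lam) * ∑ j ∈ Finset.range (k+1), lam^j / (Nat.factorial j : ℝ)) := by
  set E := Real.exp (-lam) with hEdef
  have hE1 : E < 1 := by rw [hEdef, Real.exp_lt_one_iff]; linarith
  have hE0 : 0 < E := Real.exp_pos _
  have h1E : (0:ℝ) < 1 - E := by linarith
  set q : ℕ → ℝ := fun k => E * (lam^k / (Nat.factorial k : ℝ)) with hqdef
  have hqnn : ∀ k, 0 ≤ q k := fun k => by
    rw [hqdef]; exact mul_nonneg hE0.le (by positivity)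
  have hqsum : Summable q := (Real.summable_pow_div_factorial lam).mul_left E
  have hexp : ∑' k : ℕ, lam^k / (Nat.factorial k : ℝ) = Real.exp lam := by
    rw [Real.exp_eq_exp_ℝ, NormedSpace.exp_eq_tsum_div]
  have htot : ∑' k, q k = 1 := by
    rw [hqdef, tsum_mul_left, hexp, hEdef, ← Real.exp_add]; simp
  have hpoint : ∀ k : ℕ, ztpPmf lam k * ∑ m ∈ Finset.range (k+1), sizeBiasedPmf lam m
      = (1/(1-E)) * (q k * ∑ j ∈ Finset.range k, q j) := by
    intro k
    have hsb : ∑ m ∈ Finset.range (k+1), sizeBiasedPmf lam m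
        = ∑ j ∈ Finset.range k, q j := by
      rw [Finset.sum_range_succ']
      simp [sizeBiasedPmf, hqdef, hEdef, mul_div_assoc]
    cases k with
    | zero => simp [ztpPmf, hsb]
    | succ n =>
      rw [hsb]
      have : ztpPmf lam (n+1) = (1/(1-E)) * q (n+1) := by
        simp only [ztpPmf, Nat.succ_ne_zero, if_false, hqdef, hEdef]
        have h4 : ((Nat.factorial (n+1) : ℝ)) ≠ 0 := by positivity
        field_simp
      rw [this]; ring
  have htail : ∀ k : ℕ, ∑' j : ℕ, q (j + (k+1))
      = 1 - E * ∑ j ∈ Finset.range (k+1), lam^j / (Nat.factorial j : ℝ) := by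
    intro k
    have h := Summable.sum_add_tsum_nat_add (f := q) (k+1) hqsum
    rw [htot] at h
    have h2 : ∑ j ∈ Finset.range (k+1), q j
        = E * ∑ j ∈ Finset.range (k+1), lam^j / (Nat.factorial j : ℝ) := by
      rw [hqdef, Finset.mul_sum]
    linarith
  calc ∑' k : ℕ, ztpPmf lam k * ∑ m ∈ Finset.range (k+1), sizeBiasedPmf lam m
      = ∑' k : ℕ, (1/(1-E)) * (q k * ∑ j ∈ Finset.range k, q j) := tsum_congr hpoint
    _ = (1/(1-E)) * ∑' k : ℕ, q k * ∑ j ∈ Finset.range k, q j := tsum_mul_left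
    _ = (1/(1-E)) * ∑' k : ℕ, q k * ∑' j : ℕ, q (j + (k+1)) := by
        rw [swap_tsum hqnn hqsum]
    _ = (1/(1-E)) * ∑' k : ℕ, q k *
          (1 - E * ∑ j ∈ Finset.range (k+1), lam^j / (Nat.factorial j : ℝ)) := by
        congr 1; exact tsum_congr fun k => by rw [htail k]
    _ = (1/(1-E)) * (E * ∑' k : ℕ, (lam^k / (Nat.factorial k : ℝ)) *
          (1 - E * ∑ j ∈ Finset.range (k+1), lam^j / (Nat.factorial j : ℝ))) := by
        congr 1
        rw [← tsum_mul_left]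
        exact tsum_congr fun k => by rw [hqdef]; ring
    _ = (E / (1-E)) * ∑' k : ℕ, (lam^k / (Nat.factorial k : ℝ)) *
          (1 - E * ∑ j ∈ Finset.range (k+1), lam^j / (Nat.factorial j : ℝ)) := by
        ring

theorem prob_lt_sizeBiased_ZTP
    {Ω : Type*} [MeasurableSpace Ω] (μ : Measure Ω) [IsProbabilityMeasure μ]
    (lam : ℝ) (hlam : 0 < lam)
    (X Xs : Ω → ℕ) (hX : Measurable X) (hXs : Measurable Xs)
    (hindep : IndepFun X Xs μ)
    (hdX : ∀ k : ℕ, μ (X ⁻¹' {k}) = ENNReal.ofReal (ztpPmf lam k))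
    (hdXs : ∀ k : ℕ, μ (Xs ⁻¹' {k}) = ENNReal.ofReal (sizeBiasedPmf lam k)) :
    (μ {ω | X ω < Xs ω}).toReal
      = 1 - (Real.exp (-lam) / (1 - Real.exp (-lam))) *
            (∫ t in (0 : ℝ)..lam, besselI0 (2 * Real.sqrt (lam * t)) * Real.exp (-t)) := by
  have hms : MeasurableSet {ω | X ω < Xs ω} := measurableSet_lt hX hXs
  have hcompl : {ω | X ω < Xs ω}ᶜ = {ω | Xs ω ≤ X ω} := by
    ext ω; simp [not_lt]
  have hadd : μ {ω | X ω < Xs ω} + μ ({ω | X ω < Xs ω}ᶜ) = 1 := by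
    rw [measure_add_measure_compl hms, measure_univ]
  have h1 : (μ {ω | X ω < Xs ω}).toReal + (μ {ω | Xs ω ≤ X ω}).toReal = 1 := by
    rw [← hcompl, ← ENNReal.toReal_add (measure_ne_top μ _) (measure_ne_top μ _), hadd,
      ENNReal.toReal_one]
  have hle := measure_le_toReal μ lam hlam X Xs hX hXs hindep hdX hdXs
  rw [integral_bessel lam hlam, ← tsum_chain lam hlam, ← hle]
  linarith
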